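/- arXiv:1604.05369 — 2 statements merged into one kernel-verified Lean document; each statement's English description precedes it below -/
import Mathlib

section
/- If a real n×n matrix M has an eigenvalue with nonnegative real part, then for every positive semidefinite matrix P, λmax(MᵀP + PM) ≥ 0; consequently the infimum over P ⪰ 0 of λmax(MᵀP + PM) is nonnegative. -/
open Matrix

/-- The largest value of the Rayleigh quotient `xᵀ S x` over unit vectors,
which for a symmetric matrix `S` is its largest eigenvalue. -/
noncomputable def lamMax {n : ℕ} (S : Matrix (Fin n) (Fin n) ℝ) : ℝ :=
  sSup {r : ℝ | ∃ x : Fin n → ℝ, x ⬝ᵥ x = 1 ∧ r = x ⬝ᵥ (S *ᵥ x)}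

lemma exists_eigvec {n : ℕ} (A : Matrix (Fin n) (Fin n) ℂ) {μ : ℂ}
    (h : μ ∈ spectrum ℂ A) : ∃ v : Fin n → ℂ, v ≠ 0 ∧ A *ᵥ v = μ • v := by
  rw [spectrum.mem_iff] at h
  have hdet : (algebraMap ℂ (Matrix (Fin n) (Fin n) ℂ) μ - A).det = 0 := by
    by_contra hd
    exact h ((Matrix.isUnit_iff_isUnit_det _).mpr (isUnit_iff_ne_zero.mpr hd))
  obtain ⟨v, hv0, hv⟩ := (Matrix.exists_mulVec_eq_zero_iff).mpr hdet
  refine ⟨v, hv0, ?_⟩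
  have h3 : (algebraMap ℂ (Matrix (Fin n) (Fin n) ℂ) μ) *ᵥ v = μ • v := by
    funext i
    simp [Matrix.algebraMap_eq_diagonal, Matrix.mulVec_diagonal]
  have h2 : (algebraMap ℂ (Matrix (Fin n) (Fin n) ℂ) μ) *ᵥ v - A *ᵥ v = 0 := by
    rw [← Matrix.sub_mulVec]; exact hv
  rw [h3, sub_eq_zero] at h2
  exact h2.symm

lemma key_identity {n : ℕ} (M P : Matrix (Fin n) (Fin n) ℝ) (hP : Pᵀ = P)
    (a b : Fin n → ℝ) (r s : ℝ)
    (ha : M *ᵥ a = r • a - s • b) (hb : M *ᵥ b = s • a + r • b) :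
    a ⬝ᵥ ((Mᵀ * P + P * M) *ᵥ a) + b ⬝ᵥ ((Mᵀ * P + P * M) *ᵥ b)
      = 2 * r * (a ⬝ᵥ (P *ᵥ a) + b ⬝ᵥ (P *ᵥ b)) := by
  have hsym : ∀ u w : Fin n → ℝ, u ⬝ᵥ (P *ᵥ w) = w ⬝ᵥ (P *ᵥ u) := by
    intro u w
    rw [Matrix.dotProduct_mulVec]
    nth_rewrite 1 [← hP]
    rw [Matrix.vecMul_transpose, dotProduct_comm]
  have htr : ∀ (u x : Fin n → ℝ), u ⬝ᵥ (Mᵀ *ᵥ x) = (M *ᵥ u) ⬝ᵥ x := by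
    intro u x
    rw [Matrix.dotProduct_mulVec, Matrix.vecMul_transpose]
  have hgen : ∀ (w u : Fin n → ℝ), M *ᵥ w = u →
      w ⬝ᵥ ((Mᵀ * P + P * M) *ᵥ w) = 2 * (u ⬝ᵥ (P *ᵥ w)) := by
    intro w u hw
    rw [Matrix.add_mulVec, dotProduct_add, ← Matrix.mulVec_mulVec,
      ← Matrix.mulVec_mulVec, htr, hw, hsym w (u)]
    ring
  rw [hgen a _ ha, hgen b _ hb]
  have h1 : (r • a - s • b) ⬝ᵥ (P *ᵥ a) = r * (a ⬝ᵥ (P *ᵥ a)) - s * (b ⬝ᵥ (P *ᵥ a)) := by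
    simp [sub_dotProduct, smul_dotProduct, smul_eq_mul]
  have h2 : (s • a + r • b) ⬝ᵥ (P *ᵥ b) = s * (a ⬝ᵥ (P *ᵥ b)) + r * (b ⬝ᵥ (P *ᵥ b)) := by
    simp [add_dotProduct, smul_dotProduct, smul_eq_mul]
  rw [h1, h2, hsym b a]
  ring

lemma lamMax_bddAbove {n : ℕ} (S : Matrix (Fin n) (Fin n) ℝ) :
    BddAbove {r : ℝ | ∃ x : Fin n → ℝ, x ⬝ᵥ x = 1 ∧ r = x ⬝ᵥ (S *ᵥ x)} := by
  refine ⟨∑ i, ∑ j, |S i j|, ?_⟩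
  rintro r ⟨x, hx, rfl⟩
  have hx1 : ∀ i, |x i| ≤ 1 := by
    intro i
    rw [abs_le_one_iff_mul_self_le_one]
    calc x i * x i ≤ ∑ j, x j * x j :=
          Finset.single_le_sum (fun j _ => mul_self_nonneg (x j)) (Finset.mem_univ i)
      _ = 1 := hx
  calc x ⬝ᵥ (S *ᵥ x) = ∑ i, ∑ j, x i * (S i j * x j) := by
        simp [dotProduct, Matrix.mulVec, Finset.mul_sum]
    _ ≤ ∑ i, ∑ j, |S i j| := by
        refine Finset.sum_le_sum fun i _ => Finset.sum_le_sum fun j _ => ?_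
        have h1 := hx1 i; have h2 := hx1 j
        have := le_abs_self (x i * (S i j * x j))
        rw [abs_mul, abs_mul] at this
        have hb : |x i| * (|S i j| * |x j|) ≤ 1 * (|S i j| * 1) := by
          gcongr <;> positivity
        rw [one_mul, mul_one] at hb
        linarith

lemma lamMax_nonneg_of_witness {n : ℕ} (S : Matrix (Fin n) (Fin n) ℝ)
    (w : Fin n → ℝ) (hw : w ≠ 0) (hq : 0 ≤ w ⬝ᵥ (S *ᵥ w)) : 0 ≤ lamMax S := by
  have hww : 0 < w ⬝ᵥ w := by
    rcases (dotProduct_self_eq_zero (v := w)).not.mpr hw with h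
    have hnn : 0 ≤ w ⬝ᵥ w := Finset.sum_nonneg fun i _ => mul_self_nonneg (w i)
    exact lt_of_le_of_ne hnn (Ne.symm h)
  set c := Real.sqrt (w ⬝ᵥ w) with hc
  have hc0 : 0 < c := Real.sqrt_pos.mpr hww
  have hc2 : c * c = w ⬝ᵥ w := Real.mul_self_sqrt hww.le
  set x := c⁻¹ • w with hxdef
  have hxx : x ⬝ᵥ x = 1 := by
    rw [hxdef, smul_dotProduct, dotProduct_smul, smul_eq_mul, smul_eq_mul,
      ← mul_assoc, ← mul_inv, hc2]
    field_simp
  have hxSx : 0 ≤ x ⬝ᵥ (S *ᵥ x) := by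
    rw [hxdef, Matrix.mulVec_smul, smul_dotProduct, dotProduct_smul,
      smul_eq_mul, smul_eq_mul]
    positivity
  have hmem : x ⬝ᵥ (S *ᵥ x) ∈ {r : ℝ | ∃ y : Fin n → ℝ, y ⬝ᵥ y = 1 ∧ r = y ⬝ᵥ (S *ᵥ y)} :=
    ⟨x, hxx, rfl⟩
  exact le_trans hxSx (le_csSup (lamMax_bddAbove S) hmem)

/-- If `M` has an eigenvalue with nonnegative real part, then for every
positive semidefinite `P`, `λmax(MᵀP + PM) ≥ 0`; consequently the infimum
over `P ⪰ 0` of `λmax(MᵀP + PM)` is nonnegative. -/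
theorem lamMax_nonneg_of_unstable {n : ℕ} (M : Matrix (Fin n) (Fin n) ℝ)
    (hM : ∃ μ ∈ spectrum ℂ (M.map (algebraMap ℝ ℂ)), 0 ≤ μ.re) :
    (∀ P : Matrix (Fin n) (Fin n) ℝ, P.PosSemidef →
        0 ≤ lamMax (Mᵀ * P + P * M)) ∧
      0 ≤ sInf {r : ℝ | ∃ P : Matrix (Fin n) (Fin n) ℝ, P.PosSemidef ∧
          r = lamMax (Mᵀ * P + P * M)} := by
  obtain ⟨μ, hμ, hre⟩ := hM
  obtain ⟨v, hv0, hv⟩ := exists_eigvec _ hμ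
  set a : Fin n → ℝ := fun i => (v i).re with hadef
  set b : Fin n → ℝ := fun i => (v i).im with hbdef
  have hab : M *ᵥ a = μ.re • a - μ.im • b ∧ M *ᵥ b = μ.im • a + μ.re • b := by
    constructor <;> funext i <;>
    · have h := congrFun hv i
      simp [Matrix.mulVec, dotProduct, Matrix.map_apply] at h
      have hre' := congrArg Complex.re h
      have him' := congrArg Complex.im h
      simp [Complex.mul_re, Complex.mul_im] at hre' him'
      simp [hadef, hbdef, Matrix.mulVec, dotProduct]
      first
      | exact hre'
      | (rw [him']; ring)
  have hab0 : a ≠ 0 ∨ b ≠ 0 := by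
    by_contra hcon
    push_neg at hcon
    apply hv0
    funext i
    have h1 : (v i).re = 0 := congrFun hcon.1 i
    have h2 : (v i).im = 0 := congrFun hcon.2 i
    exact Complex.ext h1 h2
  have main : ∀ P : Matrix (Fin n) (Fin n) ℝ, P.PosSemidef →
      0 ≤ lamMax (Mᵀ * P + P * M) := by
    intro P hP
    have hPsym : Pᵀ = P := by
      have h := hP.isHermitian
      simpa [Matrix.IsHermitian, Matrix.conjTranspose_eq_transpose_of_trivial] using h
    set S := Mᵀ * P + P * M with hS
    have hkey := key_identity M P hPsym a b μ.re μ.im hab.1 hab.2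
    have hqa : 0 ≤ a ⬝ᵥ (P *ᵥ a) := by
      have := hP.dotProduct_mulVec_nonneg a
      simpa using this
    have hqb : 0 ≤ b ⬝ᵥ (P *ᵥ b) := by
      have := hP.dotProduct_mulVec_nonneg b
      simpa using this
    have hsum : 0 ≤ a ⬝ᵥ (S *ᵥ a) + b ⬝ᵥ (S *ᵥ b) := by
      rw [hkey]
      positivity
    by_cases haz : a = 0
    · have hbz : b ≠ 0 := hab0.resolve_left (by simp [haz])
      apply lamMax_nonneg_of_witness S b hbz
      have : a ⬝ᵥ (S *ᵥ a) = 0 := by rw [haz]; simp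
      linarith
    · by_cases hqa' : 0 ≤ a ⬝ᵥ (S *ᵥ a)
      · exact lamMax_nonneg_of_witness S a haz hqa'
      · push_neg at hqa'
        have hbpos : 0 < b ⬝ᵥ (S *ᵥ b) := by linarith
        have hbz : b ≠ 0 := by
          intro h
          rw [h] at hbpos
          simp at hbpos
        exact lamMax_nonneg_of_witness S b hbz hbpos.le
  refine ⟨main, ?_⟩
  apply Real.sInf_nonneg
  rintro r ⟨P, hP, rfl⟩
  exact main P hP
end

section
/- With E₁, E₂ as above, the 6×6 block matrix A_a = [[E₁, E₂, −E₁], [E₁, E₂, 0], [−E₁, E₂, 2E₁]] has an eigenvalue with positive real part; in particular A_a is not Hurwitz stable. -/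
open Matrix

def IsHurwitz {m : Type*} [Fintype m] [DecidableEq m] (M : Matrix m m ℝ) : Prop :=
  ∀ μ ∈ spectrum ℂ (M.map (algebraMap ℝ ℂ)), μ.re < 0

def E₁ : Matrix (Fin 2) (Fin 2) ℝ := !![-3, -1; 12, 2]

def E₂ : Matrix (Fin 2) (Fin 2) ℝ := !![-3, 1; -12, 2]

/-- The 3×3 array of 2×2 blocks of the post-attack matrix. -/
def blocks : Fin 3 → Fin 3 → Matrix (Fin 2) (Fin 2) ℝ :=
  ![![E₁, E₂, -E₁], ![E₁, E₂, 0], ![-E₁, E₂, (2 : ℝ) • E₁]]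

/-- The 6×6 post-attack closed-loop matrix assembled from the 2×2 blocks. -/
def Aa : Matrix (Fin 3 × Fin 2) (Fin 3 × Fin 2) ℝ :=
  fun p q => blocks p.1 q.1 p.2 q.2

/-- The same matrix, written out over `Fin 6`. -/
def B6 : Matrix (Fin 6) (Fin 6) ℝ :=
  !![-3, -1, -3, 1, 3, 1;
     12, 2, -12, 2, -12, -2;
     -3, -1, -3, 1, 0, 0;
     12, 2, -12, 2, 0, 0;
     3, 1, -3, 1, -6, -2;
     -12, -2, -12, 2, 24, 4]

def eIdx : Fin 3 × Fin 2 ≃ Fin 6 where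
  toFun p := ⟨2 * p.1.val + p.2.val, by omega⟩
  invFun k := (⟨k.val / 2, by omega⟩, ⟨k.val % 2, by omega⟩)
  left_inv := by decide
  right_inv := by decide

lemma hAB : B6.submatrix eIdx eIdx = Aa := by
  ext ⟨i, j⟩ ⟨k, l⟩
  fin_cases i <;> fin_cases j <;> fin_cases k <;> fin_cases l <;>
    norm_num [B6, eIdx, Aa, blocks, E₁, E₂, Matrix.submatrix_apply, Matrix.cons_val_zero,
      Matrix.cons_val_one, Matrix.vecHead, Matrix.vecTail, Matrix.cons_val_succ,
      Matrix.smul_apply, Matrix.neg_apply, show ((2:Fin 3):Fin 3) = 2 from rfl]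

lemma det_key (t : ℝ) :
    (t • (1 : Matrix (Fin 3 × Fin 2) (Fin 3 × Fin 2) ℝ) - Aa).det
      = (t • (1 : Matrix (Fin 6) (Fin 6) ℝ) - B6).det := by
  have h : t • (1 : Matrix (Fin 3 × Fin 2) (Fin 3 × Fin 2) ℝ) - Aa
      = (t • (1 : Matrix (Fin 6) (Fin 6) ℝ) - B6).submatrix eIdx eIdx := by
    have h1 : ((1 : Matrix (Fin 6) (Fin 6) ℝ)).submatrix eIdx eIdx = 1 :=
      Matrix.submatrix_one_equiv eIdx
    ext p q
    simp [Matrix.submatrix_apply, Matrix.sub_apply, Matrix.smul_apply, ← hAB,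
      Matrix.one_apply, Equiv.apply_eq_iff_eq]
  rw [h, Matrix.det_submatrix_equiv_self]

set_option maxRecDepth 40000 in
set_option maxHeartbeats 4000000 in
lemma g5 : ((5 : ℝ) • (1 : Matrix (Fin 6) (Fin 6) ℝ) - B6).det = -3766 := by
  have h : (5 : ℝ) • (1 : Matrix (Fin 6) (Fin 6) ℝ) - B6 =
      !![8, 1, 3, -1, -3, -1; -12, 3, 12, -2, 12, 2; 3, 1, 8, -1, 0, 0;
         -12, -2, 12, 3, 0, 0; -3, -1, 3, -1, 11, 2; 12, 2, 12, -2, -24, 1] := by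
    ext i j
    fin_cases i <;> fin_cases j <;> norm_num [B6, Matrix.one_apply, Fin.ext_iff]
  rw [h]
  simp only [Matrix.det_succ_row_zero, Fin.sum_univ_succ, Fin.sum_univ_zero, Matrix.submatrix_apply,
    Fin.succAbove_zero, Fin.succ_succAbove_zero, Fin.succ_succAbove_succ, Matrix.det_fin_zero,
    Matrix.of_apply, Matrix.cons_val_succ, Matrix.cons_val_zero, Fin.val_zero, Fin.val_succ, pow_zero, pow_succ]
  norm_num

set_option maxRecDepth 40000 in
set_option maxHeartbeats 4000000 in
lemma g6 : ((6 : ℝ) • (1 : Matrix (Fin 6) (Fin 6) ℝ) - B6).det = 36288 := by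
  have h : (6 : ℝ) • (1 : Matrix (Fin 6) (Fin 6) ℝ) - B6 =
      !![9, 1, 3, -1, -3, -1; -12, 4, 12, -2, 12, 2; 3, 1, 9, -1, 0, 0;
         -12, -2, 12, 4, 0, 0; -3, -1, 3, -1, 12, 2; 12, 2, 12, -2, -24, 2] := by
    ext i j
    fin_cases i <;> fin_cases j <;> norm_num [B6, Matrix.one_apply, Fin.ext_iff]
  rw [h]
  simp only [Matrix.det_succ_row_zero, Fin.sum_univ_succ, Fin.sum_univ_zero, Matrix.submatrix_apply,
    Fin.succAbove_zero, Fin.succ_succAbove_zero, Fin.succ_succAbove_succ, Matrix.det_fin_zero,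
    Matrix.of_apply, Matrix.cons_val_succ, Matrix.cons_val_zero, Fin.val_zero, Fin.val_succ, pow_zero, pow_succ]
  norm_num

set_option maxRecDepth 100000 in
/-- `A_a` has an eigenvalue with positive real part; in particular it is not
Hurwitz stable. -/
theorem Aa_not_hurwitz :
    (∃ μ ∈ spectrum ℂ (Aa.map (algebraMap ℝ ℂ)), 0 < μ.re) ∧ ¬ IsHurwitz Aa := by
  -- intermediate value theorem gives a real root t ∈ [5,6] of det (t•1 - B6)
  set g : ℝ → ℝ := fun t => (t • (1 : Matrix (Fin 6) (Fin 6) ℝ) - B6).det with hg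
  have hcont : Continuous g :=
    Continuous.matrix_det ((continuous_id.smul continuous_const).sub continuous_const)
  have hmem : (0 : ℝ) ∈ Set.Icc (g 5) (g 6) := by
    rw [hg]; simp only [g5, g6]; constructor <;> norm_num
  obtain ⟨t, htI, htg⟩ :=
    intermediate_value_Icc (by norm_num : (5 : ℝ) ≤ 6) hcont.continuousOn hmem
  have ht5 : (5 : ℝ) ≤ t := htI.1
  -- det of t•1 - Aa vanishes
  have hroot : (t • (1 : Matrix (Fin 3 × Fin 2) (Fin 3 × Fin 2) ℝ) - Aa).det = 0 := by
    rw [det_key]; exact htg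
  -- hence t is in the complex spectrum
  have hspec : (t : ℂ) ∈ spectrum ℂ (Aa.map (algebraMap ℝ ℂ)) := by
    rw [spectrum.mem_iff]
    intro hu
    have heq : algebraMap ℂ (Matrix (Fin 3 × Fin 2) (Fin 3 × Fin 2) ℂ) (t : ℂ)
        - Aa.map (algebraMap ℝ ℂ)
        = (t • (1 : Matrix (Fin 3 × Fin 2) (Fin 3 × Fin 2) ℝ) - Aa).map (algebraMap ℝ ℂ) := by
      ext i j
      simp only [Matrix.sub_apply, Matrix.map_apply, Matrix.smul_apply, Matrix.one_apply,
        Matrix.algebraMap_matrix_apply, Complex.coe_algebraMap, smul_eq_mul]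
      split_ifs <;> simp
    have hdet : (algebraMap ℂ (Matrix (Fin 3 × Fin 2) (Fin 3 × Fin 2) ℂ) (t : ℂ)
        - Aa.map (algebraMap ℝ ℂ)).det = 0 := by
      rw [heq, ← RingHom.mapMatrix_apply, ← RingHom.map_det, hroot, map_zero]
    rw [Matrix.isUnit_iff_isUnit_det, hdet] at hu
    exact (not_isUnit_zero : ¬ IsUnit (0 : ℂ)) hu
  have hpos : (0 : ℝ) < ((t : ℂ)).re := by simpa using lt_of_lt_of_le (by norm_num) ht5
  refine ⟨⟨(t : ℂ), hspec, hpos⟩, fun hH => ?_⟩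
  have := hH (t : ℂ) hspec
  linarith
end
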